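/- arXiv:1606.00157 — 2 statements merged into one kernel-verified Lean document; each statement's English description precedes it below -/
import Mathlib

section
/- With the same assumptions as in the zero-temperature limit of the tempered distribution (f continuous, bounded by R_max, f^{1/T} integrable, S_opt of positive finite measure, concentration hypothesis), the expected reward at temperature T, defined as E[R_T] = ∫ f(θ) · f(θ)^{1/T} dθ / ∫ f(θ)^{1/T} dθ, satisfies lim_{T→0} E[R_T] = R_max. -/
open MeasureTheory Filter

/-- Under the same assumptions as in the zero-temperature limit of the
tempered distribution (`f` continuous, `0 ≤ f ≤ R_max`, `f^(1/T)` and `f·f^(1/T)` integrable,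
`S_opt = {θ | f θ = R_max}` of positive finite measure, concentration of the superlevel sets),
the expected reward at temperature `T`,
`E[R_T] = ∫ f(θ)·f(θ)^(1/T) dθ / ∫ f(θ)^(1/T) dθ`, tends to `R_max` as `T → 0⁺`. -/
theorem expected_reward_tendsto_Rmax {n : ℕ}
    (f : (Fin n → ℝ) → ℝ) (Rmax : ℝ)
    (hf : Continuous f)
    (hnonneg : ∀ θ, 0 ≤ f θ)
    (hle : ∀ θ, f θ ≤ Rmax)
    (Sopt : Set (Fin n → ℝ)) (hSopt : Sopt = {θ | f θ = Rmax})
    (hSmeas : MeasurableSet Sopt)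
    (hSpos : 0 < volume Sopt) (hSfin : volume Sopt < ⊤)
    (hint : ∀ᶠ T in nhdsWithin (0 : ℝ) (Set.Ioi 0),
      Integrable (fun θ => (f θ) ^ (1 / T)) (volume : Measure (Fin n → ℝ)) ∧
      Integrable (fun θ => f θ * (f θ) ^ (1 / T)) (volume : Measure (Fin n → ℝ)))
    (hsupp : volume (Function.support f) < ⊤)
    (hconc : Tendsto (fun ε : ℝ => volume {θ | Rmax - ε < f θ})
      (nhdsWithin 0 (Set.Ioi 0)) (nhds (volume Sopt))) :
    Tendsto (fun T : ℝ => (∫ θ, f θ * (f θ) ^ (1 / T)) / ∫ θ, (f θ) ^ (1 / T))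
      (nhdsWithin 0 (Set.Ioi 0)) (nhds Rmax) := by
  rcases eq_or_lt_of_le ((hnonneg (fun _ => 0)).trans (hle _)) with hR | hR
  · -- Rmax = 0 : f ≡ 0 and the ratio is constantly 0
    have hf0 : ∀ θ, f θ = 0 := fun θ => le_antisymm ((hle θ).trans hR.ge) (hnonneg θ)
    have hz : ∀ T : ℝ, (∫ θ, f θ * (f θ) ^ (1 / T)) / ∫ θ, (f θ) ^ (1 / T) = 0 := by
      intro T; simp [hf0]
    rw [← hR]
    exact tendsto_const_nhds.congr fun T => (hz T).symm
  · -- main case 0 < Rmax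
    have hSfinR : volume Sopt ≠ ⊤ := hSfin.ne
    set S := (volume Sopt).toReal with hS
    have hSpos' : 0 < S := ENNReal.toReal_pos hSpos.ne' hSfinR
    have hSsub : Sopt ⊆ Function.support f := by
      intro θ hθ
      rw [hSopt] at hθ
      simp only [Function.mem_support]
      rw [hθ]; exact hR.ne'
    set M := (volume (Function.support f)).toReal with hM
    have hMpos : 0 < M :=
      lt_of_lt_of_le hSpos' (ENNReal.toReal_mono hsupp.ne (measure_mono hSsub))
    have hsuppmeas : MeasurableSet (Function.support f) := by
      have : Function.support f = f ⁻¹' ({0}ᶜ) := by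
        ext θ; simp [Function.mem_support]
      rw [this]
      exact hf.measurable (measurableSet_singleton 0).compl
    rw [Metric.tendsto_nhds]
    intro ε hε
    set r : ℝ := Rmax - min (ε / 2) (Rmax / 2) with hr
    have hmin1 : min (ε / 2) (Rmax / 2) ≤ ε / 2 := min_le_left _ _
    have hmin2 : min (ε / 2) (Rmax / 2) ≤ Rmax / 2 := min_le_right _ _
    have hminpos : 0 < min (ε / 2) (Rmax / 2) := lt_min (by linarith) (by linarith)
    have hr0 : 0 < r := by simp only [hr]; linarith
    have hrR : r < Rmax := by simp only [hr]; linarith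
    have hrε : Rmax - ε < r := by simp only [hr]; linarith
    set c : ℝ := r / Rmax with hc
    have hc0 : 0 < c := div_pos hr0 hR
    have hc1 : c < 1 := (div_lt_one hR).2 hrR
    set δ : ℝ := (r - (Rmax - ε)) * S / (r * M) with hδdef
    have hδ : 0 < δ := by
      apply div_pos (mul_pos (by linarith) hSpos') (mul_pos hr0 hMpos)
    have hβt : Tendsto (fun T : ℝ => c ^ (1 / T)) (nhdsWithin 0 (Set.Ioi 0)) (nhds 0) := by
      have h1 : Tendsto (fun T : ℝ => 1 / T) (nhdsWithin 0 (Set.Ioi 0)) atTop := by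
        simpa [one_div] using tendsto_inv_nhdsGT_zero (𝕜 := ℝ)
      exact (tendsto_rpow_atTop_of_base_lt_one c (by linarith) hc1).comp h1
    filter_upwards [hint, self_mem_nhdsWithin, hβt (Iio_mem_nhds hδ)] with T hintT hT hcT
    obtain ⟨hint1, hint2⟩ := hintT
    have hT0 : (0 : ℝ) < T := hT
    set β : ℝ := 1 / T with hβ
    have hβpos : 0 < β := by positivity
    have hnn : ∀ θ, (0 : ℝ) ≤ f θ ^ β := fun θ => Real.rpow_nonneg (hnonneg θ) β
    -- lower bound on the denominator
    have hSInt : ∫ θ in Sopt, f θ ^ β = Rmax ^ β * S := by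
      rw [setIntegral_congr_fun hSmeas (g := fun _ => Rmax ^ β)
        (fun θ hθ => by rw [hSopt] at hθ; rw [hθ]), setIntegral_const, smul_eq_mul, mul_comm, measureReal_def]
    have hDlow : Rmax ^ β * S ≤ ∫ θ, f θ ^ β := by
      rw [← hSInt]
      exact setIntegral_le_integral hint1 (ae_of_all _ hnn)
    have hD0 : 0 < ∫ θ, f θ ^ β := lt_of_lt_of_le (by positivity) hDlow
    -- upper bound on the ratio
    have hub : (∫ θ, f θ * f θ ^ β) ≤ Rmax * ∫ θ, f θ ^ β := by
      rw [← integral_const_mul]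
      exact integral_mono hint2 (hint1.const_mul Rmax)
        (fun θ => mul_le_mul_of_nonneg_right (hle θ) (hnn θ))
    -- superlevel set
    set A : Set (Fin n → ℝ) := {θ | r < f θ} with hA
    have hAmeas : MeasurableSet A := measurableSet_lt measurable_const hf.measurable
    -- tail bound
    have htail : ∫ θ in Aᶜ, f θ ^ β ≤ r ^ β * M := by
      have hindInt : Integrable ((Function.support f).indicator fun _ => r ^ β) volume := by
        refine (integrableOn_const hsupp.ne).integrable_indicator hsuppmeas
      have hptw : ∀ θ ∈ Aᶜ, f θ ^ β ≤ (Function.support f).indicator (fun _ => r ^ β) θ := by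
        intro θ hθ
        by_cases hs : θ ∈ Function.support f
        · rw [Set.indicator_of_mem hs]
          exact Real.rpow_le_rpow (hnonneg θ) (not_lt.1 hθ) hβpos.le
        · rw [Set.indicator_of_notMem hs]
          have : f θ = 0 := by simpa [Function.mem_support, not_not] using hs
          rw [this, Real.zero_rpow hβpos.ne']
      calc ∫ θ in Aᶜ, f θ ^ β
          ≤ ∫ θ in Aᶜ, (Function.support f).indicator (fun _ => r ^ β) θ :=
            setIntegral_mono_on (hint1.integrableOn) (hindInt.integrableOn)
              hAmeas.compl hptw
        _ ≤ ∫ θ, (Function.support f).indicator (fun _ => r ^ β) θ :=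
            setIntegral_le_integral hindInt
              (ae_of_all _ fun θ => Set.indicator_nonneg (fun _ _ => by positivity) θ)
        _ = r ^ β * M := by
            rw [integral_indicator hsuppmeas, setIntegral_const, smul_eq_mul, mul_comm, measureReal_def]
    -- lower bound on numerator
    have hsplit : (∫ θ in A, f θ ^ β) + ∫ θ in Aᶜ, f θ ^ β = ∫ θ, f θ ^ β :=
      integral_add_compl hAmeas hint1
    have hNlow : r * ((∫ θ, f θ ^ β) - r ^ β * M) ≤ ∫ θ, f θ * f θ ^ β := by
      have h1 : ∫ θ in A, r * f θ ^ β ≤ ∫ θ in A, f θ * f θ ^ β :=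
        setIntegral_mono_on ((hint1.const_mul r).integrableOn) (hint2.integrableOn) hAmeas
          (fun θ hθ => mul_le_mul_of_nonneg_right (le_of_lt hθ) (hnn θ))
      have h2 : ∫ θ in A, f θ * f θ ^ β ≤ ∫ θ, f θ * f θ ^ β :=
        setIntegral_le_integral hint2
          (ae_of_all _ fun θ => mul_nonneg (hnonneg θ) (hnn θ))
      have h3 : ∫ θ in A, r * f θ ^ β = r * ((∫ θ, f θ ^ β) - ∫ θ in Aᶜ, f θ ^ β) := by
        rw [integral_const_mul]
        congr 1
        linarith [hsplit]
      have h4 : r * ((∫ θ, f θ ^ β) - r ^ β * M)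
          ≤ r * ((∫ θ, f θ ^ β) - ∫ θ in Aᶜ, f θ ^ β) := by
        apply mul_le_mul_of_nonneg_left _ hr0.le
        linarith [htail]
      linarith [h1, h2, h3 ▸ h1]
    -- key smallness from c^β < δ
    have hcβ : c ^ β < δ := by simpa [hβ, one_div] using hcT
    have hcβeq : c ^ β = r ^ β / Rmax ^ β := Real.div_rpow hr0.le hR.le β
    have hkey : r * r ^ β * M < (r - (Rmax - ε)) * (Rmax ^ β * S) := by
      have h5 : r ^ β / Rmax ^ β < (r - (Rmax - ε)) * S / (r * M) := hcβeq ▸ hcβ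
      have hRβ : (0 : ℝ) < Rmax ^ β := Real.rpow_pos_of_pos hR β
      rw [div_lt_div_iff₀ hRβ (mul_pos hr0 hMpos)] at h5
      nlinarith [h5]
    -- conclude
    have hlow : Rmax - ε < (∫ θ, f θ * f θ ^ β) / ∫ θ, f θ ^ β := by
      rw [lt_div_iff₀ hD0]
      have : (Rmax - ε) * ∫ θ, f θ ^ β < r * ((∫ θ, f θ ^ β) - r ^ β * M) := by
        have hDlow' := hDlow
        nlinarith [hDlow, hkey, hD0]
      linarith [hNlow]
    have hhigh : (∫ θ, f θ * f θ ^ β) / ∫ θ, f θ ^ β ≤ Rmax := by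
      rw [div_le_iff₀ hD0]
      linarith [hub]
    rw [Real.dist_eq, abs_of_nonpos (by linarith)]
    linarith
end

section
/- Let f : ℝⁿ → (0,1] be measurable with f^{1/T} and f^{1+1/T} integrable for all T in an interval. Then the expected reward E[R_T] = ∫ f^{1+1/T} dθ / ∫ f^{1/T} dθ is a nonincreasing function of T on that interval; equivalently, setting s = 1/T, the map s ↦ ∫ f^{s+1} / ∫ f^s is nondecreasing in s. -/
open MeasureTheory

open scoped ENNReal

/-- Hölder-type key inequality (log-convexity of `s ↦ ∫⁻ F ^ s`). -/
lemma key_lintegral {α : Type*} [MeasurableSpace α] (μ : Measure α)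
    (F : α → ℝ≥0∞) (hF : Measurable F)
    (hF0 : ∀ x, F x ≠ 0) (hFtop : ∀ x, F x ≠ ∞)
    {s₁ s₂ : ℝ} (h : s₁ < s₂)
    (hA0 : (∫⁻ x, F x ^ s₁ ∂μ) ≠ 0) (hAtop : (∫⁻ x, F x ^ s₁ ∂μ) ≠ ∞)
    (hB0 : (∫⁻ x, F x ^ (s₂ + 1) ∂μ) ≠ 0) (hBtop : (∫⁻ x, F x ^ (s₂ + 1) ∂μ) ≠ ∞) :
    (∫⁻ x, F x ^ (s₁ + 1) ∂μ) * (∫⁻ x, F x ^ s₂ ∂μ) ≤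
      (∫⁻ x, F x ^ s₁ ∂μ) * (∫⁻ x, F x ^ (s₂ + 1) ∂μ) := by
  set δ : ℝ := s₂ - s₁ with hδ
  have hδ0 : 0 < δ := by simp [hδ]; linarith
  set t : ℝ := δ / (δ + 1) with ht
  have hδ1 : 0 < δ + 1 := by linarith
  have ht0 : 0 < t := div_pos hδ0 hδ1
  have ht1 : t < 1 := by
    rw [ht, div_lt_one hδ1]; linarith
  have ht1' : (0:ℝ) < 1 - t := by linarith
  have h1t : 1 - t = 1 / (δ + 1) := by
    rw [ht]; field_simp; ring
  have hpq : Real.HolderConjugate (1 / t) (1 / (1 - t)) := by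
    rw [Real.holderConjugate_iff]; constructor
    · rw [lt_div_iff₀ ht0]; linarith
    · rw [one_div, inv_inv, one_div, inv_inv]; ring
  have hmA : ∀ c : ℝ, AEMeasurable (fun x => F x ^ c) μ := fun c =>
    ((ENNReal.continuous_rpow_const.measurable).comp hF).aemeasurable
  have hpt : ∀ (x : α) (a b : ℝ), F x ^ (a + b) = F x ^ a * F x ^ b := fun x a b =>
    ENNReal.rpow_add a b (hF0 x) (hFtop x)
  have hptm : ∀ (x : α) (a b : ℝ), (F x ^ a) ^ b = F x ^ (a * b) := fun x a b =>
    (ENNReal.rpow_mul (F x) a b).symm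
  set A := ∫⁻ x, F x ^ s₁ ∂μ
  set B := ∫⁻ x, F x ^ (s₂ + 1) ∂μ
  have e1 : s₁ * t + (s₂ + 1) * (1 - t) = s₁ + 1 := by
    rw [ht, h1t]; field_simp; ring
  have e2 : (s₂ + 1) * t + s₁ * (1 - t) = s₂ := by
    rw [ht, h1t]; field_simp; ring
  have H1 : (∫⁻ x, F x ^ (s₁ + 1) ∂μ) ≤ A ^ t * B ^ (1 - t) := by
    have hH := ENNReal.lintegral_mul_le_Lp_mul_Lq μ hpq
      (hmA (s₁ * t)) (hmA ((s₂ + 1) * (1 - t)))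
    calc (∫⁻ x, F x ^ (s₁ + 1) ∂μ)
        = ∫⁻ x, ((fun x => F x ^ (s₁ * t)) * fun x => F x ^ ((s₂ + 1) * (1 - t))) x ∂μ := by
          congr 1; funext x
          simp only [Pi.mul_apply]
          rw [← hpt x, e1]
      _ ≤ (∫⁻ x, (F x ^ (s₁ * t)) ^ (1 / t) ∂μ) ^ (1 / (1 / t)) *
            (∫⁻ x, (F x ^ ((s₂ + 1) * (1 - t))) ^ (1 / (1 - t)) ∂μ) ^ (1 / (1 / (1 - t))) := hH
      _ = A ^ t * B ^ (1 - t) := by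
          rw [one_div_one_div, one_div_one_div]
          congr 2
          · apply lintegral_congr; intro x
            rw [hptm]; congr 1; field_simp [ht0.ne', ht1'.ne']
          · apply lintegral_congr; intro x
            rw [hptm]; congr 1; field_simp [ht0.ne', ht1'.ne']
  have H2 : (∫⁻ x, F x ^ s₂ ∂μ) ≤ B ^ t * A ^ (1 - t) := by
    have hH := ENNReal.lintegral_mul_le_Lp_mul_Lq μ hpq
      (hmA ((s₂ + 1) * t)) (hmA (s₁ * (1 - t)))
    calc (∫⁻ x, F x ^ s₂ ∂μ)
        = ∫⁻ x, ((fun x => F x ^ ((s₂ + 1) * t)) * fun x => F x ^ (s₁ * (1 - t))) x ∂μ := by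
          congr 1; funext x
          simp only [Pi.mul_apply]
          rw [← hpt x, e2]
      _ ≤ (∫⁻ x, (F x ^ ((s₂ + 1) * t)) ^ (1 / t) ∂μ) ^ (1 / (1 / t)) *
            (∫⁻ x, (F x ^ (s₁ * (1 - t))) ^ (1 / (1 - t)) ∂μ) ^ (1 / (1 / (1 - t))) := hH
      _ = B ^ t * A ^ (1 - t) := by
          rw [one_div_one_div, one_div_one_div]
          congr 2
          · apply lintegral_congr; intro x
            rw [hptm]; congr 1; field_simp [ht0.ne', ht1'.ne']
          · apply lintegral_congr; intro x
            rw [hptm]; congr 1; field_simp [ht0.ne', ht1'.ne']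
  calc (∫⁻ x, F x ^ (s₁ + 1) ∂μ) * (∫⁻ x, F x ^ s₂ ∂μ)
      ≤ (A ^ t * B ^ (1 - t)) * (B ^ t * A ^ (1 - t)) := mul_le_mul' H1 H2
    _ = (A ^ t * A ^ (1 - t)) * (B ^ t * B ^ (1 - t)) := by ring
    _ = A * B := by
        rw [← ENNReal.rpow_add t (1 - t) hA0 hAtop, ← ENNReal.rpow_add t (1 - t) hB0 hBtop]
        norm_num

/-- Let `f : ℝⁿ → (0,1]` be measurable with `f^s` and `f^(s+1)` integrable
for all `s` in a set `I` (here `s = 1/T` is the inverse temperature).  Then the map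
`s ↦ ∫ f^(s+1) / ∫ f^s` is nondecreasing in `s` on `I`; equivalently, the expected reward
`E[R_T] = ∫ f^(1+1/T) / ∫ f^(1/T)` is nonincreasing in the temperature `T`. -/
theorem expected_reward_monotone {n : ℕ}
    (f : (Fin n → ℝ) → ℝ)
    (hmeas : Measurable f)
    (hrange : ∀ θ, f θ ∈ Set.Ioc (0 : ℝ) 1)
    (I : Set ℝ)
    (hint : ∀ s ∈ I, Integrable (fun θ => (f θ) ^ s) (volume : Measure (Fin n → ℝ)) ∧
      Integrable (fun θ => (f θ) ^ (s + 1)) (volume : Measure (Fin n → ℝ))) :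
    (∀ s₁ ∈ I, ∀ s₂ ∈ I, s₁ ≤ s₂ →
      (∫ θ, (f θ) ^ (s₁ + 1)) / (∫ θ, (f θ) ^ s₁) ≤
      (∫ θ, (f θ) ^ (s₂ + 1)) / (∫ θ, (f θ) ^ s₂)) ∧
    (∀ T₁ > (0:ℝ), ∀ T₂ > (0:ℝ), 1 / T₁ ∈ I → 1 / T₂ ∈ I → T₁ ≤ T₂ →
      (∫ θ, (f θ) ^ (1 + 1 / T₂)) / (∫ θ, (f θ) ^ (1 / T₂)) ≤
      (∫ θ, (f θ) ^ (1 + 1 / T₁)) / (∫ θ, (f θ) ^ (1 / T₁))) := by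
  have hfpos : ∀ θ, 0 < f θ := fun θ => (hrange θ).1
  set F : (Fin n → ℝ) → ℝ≥0∞ := fun θ => ENNReal.ofReal (f θ) with hFdef
  have hFmeas : Measurable F := hmeas.ennreal_ofReal
  have hF0 : ∀ θ, F θ ≠ 0 := fun θ => by
    simp [hFdef, ENNReal.ofReal_eq_zero, not_le, hfpos θ]
  have hFtop : ∀ θ, F θ ≠ ∞ := fun θ => ENNReal.ofReal_ne_top
  -- real measurability of f ^ c
  have hms : ∀ c : ℝ, Measurable (fun θ => (f θ) ^ c) := by
    intro c
    have hrw : (fun θ => (f θ) ^ c) = fun θ => Real.exp (Real.log (f θ) * c) := by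
      funext θ; rw [Real.rpow_def_of_pos (hfpos θ)]
    rw [hrw]
    exact Real.measurable_exp.comp ((Real.measurable_log.comp hmeas).mul_const c)
  -- relation between real integrals and lintegrals
  have hkey : ∀ c : ℝ, (∫ θ, (f θ) ^ c) = (∫⁻ θ, F θ ^ c).toReal := by
    intro c
    rw [integral_eq_lintegral_of_nonneg_ae
      (Filter.Eventually.of_forall fun θ => (Real.rpow_pos_of_pos (hfpos θ) c).le)
      ((hms c).aestronglyMeasurable)]
    congr 1
    apply lintegral_congr
    intro θ
    rw [ENNReal.ofReal_rpow_of_pos (hfpos θ)]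
  have hfin : ∀ c : ℝ, Integrable (fun θ => (f θ) ^ c) volume → (∫⁻ θ, F θ ^ c) ≠ ∞ := by
    intro c hc
    have hlt := hc.lintegral_lt_top
    have heq : (∫⁻ θ, ENNReal.ofReal ((f θ) ^ c)) = ∫⁻ θ, F θ ^ c := by
      apply lintegral_congr
      intro θ
      rw [ENNReal.ofReal_rpow_of_pos (hfpos θ)]
    rw [heq] at hlt
    exact hlt.ne
  have hμpos : 0 < (volume : Measure (Fin n → ℝ)) Set.univ :=
    isOpen_univ.measure_pos volume Set.univ_nonempty
  have hpos : ∀ c : ℝ, (∫⁻ θ, F θ ^ c) ≠ 0 := by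
    intro c
    have hp : 0 < ∫⁻ θ, F θ ^ c := by
      have hmc : Measurable fun θ : Fin n → ℝ => F θ ^ c := by
        exact ENNReal.continuous_rpow_const.measurable.comp hFmeas
      rw [lintegral_pos_iff_support hmc]
      have hsupp : Function.support (fun θ => F θ ^ c) = Set.univ := by
        ext θ
        simp [Function.mem_support, ENNReal.rpow_eq_zero_iff, hF0 θ, hFtop θ]
      rw [hsupp]
      exact hμpos
    exact hp.ne'
  have hrpos : ∀ c : ℝ, Integrable (fun θ => (f θ) ^ c) volume → 0 < ∫ θ, (f θ) ^ c := by
    intro c hc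
    rw [hkey c]
    exact ENNReal.toReal_pos (hpos c) (hfin c hc)
  have main : ∀ s₁ ∈ I, ∀ s₂ ∈ I, s₁ ≤ s₂ →
      (∫ θ, (f θ) ^ (s₁ + 1)) / (∫ θ, (f θ) ^ s₁) ≤
      (∫ θ, (f θ) ^ (s₂ + 1)) / (∫ θ, (f θ) ^ s₂) := by
    intro s₁ hs₁ s₂ hs₂ hle
    rcases eq_or_lt_of_le hle with rfl | hlt
    · exact le_refl _
    · rw [div_le_div_iff₀ (hrpos s₁ (hint s₁ hs₁).1) (hrpos s₂ (hint s₂ hs₂).1)]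
      have hineq := key_lintegral volume F hFmeas hF0 hFtop hlt
        (hpos s₁) (hfin s₁ (hint s₁ hs₁).1) (hpos (s₂ + 1)) (hfin (s₂ + 1) (hint s₂ hs₂).2)
      rw [hkey (s₁ + 1), hkey s₂, hkey s₁, hkey (s₂ + 1),
        ← ENNReal.toReal_mul, ← ENNReal.toReal_mul]
      exact ENNReal.toReal_mono
        (ENNReal.mul_ne_top (hfin (s₂ + 1) (hint s₂ hs₂).2) (hfin s₁ (hint s₁ hs₁).1))
        (hineq.trans_eq (mul_comm _ _))
  refine ⟨main, ?_⟩
  intro T₁ hT₁ T₂ hT₂ h₁I h₂I hT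
  have hs : 1 / T₂ ≤ 1 / T₁ := one_div_le_one_div_of_le hT₁ hT
  have hmm := main (1 / T₂) h₂I (1 / T₁) h₁I hs
  have e1 : (1 : ℝ) + 1 / T₂ = 1 / T₂ + 1 := by ring
  have e2 : (1 : ℝ) + 1 / T₁ = 1 / T₁ + 1 := by ring
  rw [e1, e2]
  exact hmm
end
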